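/- Let γ̂ : ℝ → ℝ³ be the real-analytic curve γ̂(s) = (1/(1+s²+s⁴+s⁶+s⁸+s¹⁰))·(s+s³+s⁵+s⁷+s⁹, s⁵+s⁷+s⁹, s¹⁰). Set w(s) := γ̂'(s) × γ̂''(s) and Δ(s) := det(γ̂'(s), γ̂''(s), γ̂'''(s)). Then γ̂'(0) ≠ 0, w(0) = w'(0) = w''(0) = 0 and w'''(0) ≠ 0 (so s = 0 is a non-generic inflection point of order N = 3), while Δ^{(k)}(0) = 0 for 0 ≤ k ≤ 9 and Δ^{(10)}(0) ≠ 0 (so the order of torsion at s = 0 is M = 10). In particular M ≥ 3N, so the normalized Darboux vector field extends smoothly across s = 0 with N odd, and the curve carries a rectifying Möbius developable whose centerline has a non-generic inflection point. -/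

import Mathlib

open Real
open scoped ContDiff

noncomputable abbrev E3 := EuclideanSpace ℝ (Fin 3)

/-- The cross product of vectors in Euclidean 3-space. -/
noncomputable def cross3 (u v : E3) : E3 :=
  (WithLp.equiv 2 (Fin 3 → ℝ)).symm
    ![u 1 * v 2 - u 2 * v 1, u 2 * v 0 - u 0 * v 2, u 0 * v 1 - u 1 * v 0]

/-- The dot product of vectors in Euclidean 3-space. -/
noncomputable def dot3 (u v : E3) : ℝ := u 0 * v 0 + u 1 * v 1 + u 2 * v 2

/-- The determinant of the 3×3 matrix with columns `u`, `v`, `w`. -/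
noncomputable def det3 (u v w : E3) : ℝ := dot3 u (cross3 v w)
/-- The curve of Example 1.11, expressed near its point at infinity. -/
noncomputable def kurono (s : ℝ) : E3 :=
  (WithLp.equiv 2 (Fin 3 → ℝ)).symm
    ![(s + s ^ 3 + s ^ 5 + s ^ 7 + s ^ 9) /
        (1 + s ^ 2 + s ^ 4 + s ^ 6 + s ^ 8 + s ^ 10),
      (s ^ 5 + s ^ 7 + s ^ 9) / (1 + s ^ 2 + s ^ 4 + s ^ 6 + s ^ 8 + s ^ 10),
      s ^ 10 / (1 + s ^ 2 + s ^ 4 + s ^ 6 + s ^ 8 + s ^ 10)]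

/- ## Auxiliary machinery -/

lemma key (n : ℕ) (g : ℝ → ℝ) (hg : ContDiff ℝ ∞ g) :
    (∀ k < n, iteratedDeriv k (fun s : ℝ => s ^ n * g s) 0 = 0) ∧
      iteratedDeriv n (fun s : ℝ => s ^ n * g s) 0 = n.factorial * g 0 := by
  induction n generalizing g with
  | zero => exact ⟨fun k hk => absurd hk (by omega), by simp⟩
  | succ n ih =>
    have hg' : ContDiff ℝ ∞ (deriv g) := (contDiff_infty_iff_deriv.mp hg).2
    have hgd : Differentiable ℝ g := (contDiff_infty_iff_deriv.mp hg).1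
    set h : ℝ → ℝ := fun s => (n + 1 : ℝ) * g s + s * deriv g s with hh
    have hhc : ContDiff ℝ ∞ h := (contDiff_const.mul hg).add (contDiff_id.mul hg')
    have hder : deriv (fun s : ℝ => s ^ (n + 1) * g s) = fun s : ℝ => s ^ n * h s := by
      funext s
      have H : HasDerivAt (fun s : ℝ => s ^ (n + 1) * g s)
          (((n + 1 : ℕ) : ℝ) * s ^ n * g s + s ^ (n + 1) * deriv g s) s :=
        (hasDerivAt_pow (n + 1) s).mul (hgd s).hasDerivAt |>.congr_deriv (by push_cast; ring)
      rw [H.deriv, hh]; push_cast; ring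
    have step : ∀ k, iteratedDeriv (k + 1) (fun s : ℝ => s ^ (n + 1) * g s) 0
        = iteratedDeriv k (fun s : ℝ => s ^ n * h s) 0 := by
      intro k; rw [iteratedDeriv_succ', hder]
    constructor
    · intro k hk
      match k with
      | 0 => simp
      | k + 1 => rw [step]; exact (ih h hhc).1 k (by omega)
    · rw [step, (ih h hhc).2, hh]
      simp [Nat.factorial_succ]; ring

lemma hasDerivAt_e3 {a b c : ℝ → ℝ} {a' b' c' : ℝ} {x : ℝ}
    (ha : HasDerivAt a a' x) (hb : HasDerivAt b b' x) (hc : HasDerivAt c c' x) :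
    HasDerivAt (fun s => (WithLp.equiv 2 (Fin 3 → ℝ)).symm ![a s, b s, c s] : ℝ → E3)
      ((WithLp.equiv 2 (Fin 3 → ℝ)).symm ![a', b', c']) x := by
  have hF : HasDerivAt (fun s => ![a s, b s, c s]) ![a', b', c'] x := by
    rw [hasDerivAt_pi]; intro i; fin_cases i <;> simpa
  exact ((PiLp.continuousLinearEquiv 2 ℝ
    (fun _ : Fin 3 => ℝ)).symm.toContinuousLinearMap.hasFDerivAt.comp_hasDerivAt x hF)

lemma iteratedDeriv_e3 (k : ℕ) (a b c : ℝ → ℝ) (ha : ContDiff ℝ ∞ a) (hb : ContDiff ℝ ∞ b)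
    (hc : ContDiff ℝ ∞ c) (x : ℝ) :
    iteratedDeriv k (fun s => (WithLp.equiv 2 (Fin 3 → ℝ)).symm ![a s, b s, c s] : ℝ → E3) x
      = (WithLp.equiv 2 (Fin 3 → ℝ)).symm
          ![iteratedDeriv k a x, iteratedDeriv k b x, iteratedDeriv k c x] := by
  induction k generalizing a b c x with
  | zero => simp
  | succ k ih =>
    have hda : Differentiable ℝ a := (contDiff_infty_iff_deriv.mp ha).1
    have hdb : Differentiable ℝ b := (contDiff_infty_iff_deriv.mp hb).1
    have hdc : Differentiable ℝ c := (contDiff_infty_iff_deriv.mp hc).1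
    have hder : deriv (fun s => (WithLp.equiv 2 (Fin 3 → ℝ)).symm ![a s, b s, c s] : ℝ → E3)
        = fun s => (WithLp.equiv 2 (Fin 3 → ℝ)).symm ![deriv a s, deriv b s, deriv c s] := by
      funext s
      exact (hasDerivAt_e3 (hda s).hasDerivAt (hdb s).hasDerivAt (hdc s).hasDerivAt).deriv
    rw [iteratedDeriv_succ', hder,
      ih _ _ _ (contDiff_infty_iff_deriv.mp ha).2 (contDiff_infty_iff_deriv.mp hb).2
        (contDiff_infty_iff_deriv.mp hc).2 x, iteratedDeriv_succ', iteratedDeriv_succ',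
      iteratedDeriv_succ']

lemma e3_ne_zero (v : Fin 3 → ℝ) (i : Fin 3) (h : v i ≠ 0) :
    ((WithLp.equiv 2 (Fin 3 → ℝ)).symm v : E3) ≠ 0 := by
  intro hv
  apply h
  have := congrFun (congrArg (WithLp.equiv 2 (Fin 3 → ℝ)) hv) i
  simpa using this

/- ## Nonvanishing of the denominator, and derivatives of the polynomial numerators -/

lemma hq (s : ℝ) : (1 : ℝ) + s ^ 2 + s ^ 4 + s ^ 6 + s ^ 8 + s ^ 10 ≠ 0 := by positivity


lemma hdq (s : ℝ) : HasDerivAt (fun s : ℝ => 1 + s ^ 2 + s ^ 4 + s ^ 6 + s ^ 8 + s ^ 10) (2 * s ^ 1 + 4 * s ^ 3 + 6 * s ^ 5 + 8 * s ^ 7 + 10 * s ^ 9) s := by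
  have h := (((((hasDerivAt_const s (1 : ℝ)).add (hasDerivAt_pow 2 s)).add (hasDerivAt_pow 4 s)).add (hasDerivAt_pow 6 s)).add (hasDerivAt_pow 8 s)).add (hasDerivAt_pow 10 s)
  exact h.congr_deriv (by push_cast; ring)

lemma hdp1 (s : ℝ) : HasDerivAt (fun s : ℝ => s + s ^ 3 + s ^ 5 + s ^ 7 + s ^ 9) ((1 : ℝ) + 3 * s ^ 2 + 5 * s ^ 4 + 7 * s ^ 6 + 9 * s ^ 8) s := by
  have h := ((((hasDerivAt_id' s).add (hasDerivAt_pow 3 s)).add (hasDerivAt_pow 5 s)).add (hasDerivAt_pow 7 s)).add (hasDerivAt_pow 9 s)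
  exact h.congr_deriv (by push_cast; ring)

lemma hdA1 (s : ℝ) : HasDerivAt (fun s : ℝ => (1 : ℝ) + 2 * s ^ 2 + 3 * s ^ 4 + 4 * s ^ 6 + 5 * s ^ 8 + (-5) * s ^ 10 + (-4) * s ^ 12 + (-3) * s ^ 14 + (-2) * s ^ 16 + (-1) * s ^ 18) (4 * s ^ 1 + 12 * s ^ 3 + 24 * s ^ 5 + 40 * s ^ 7 + (-50) * s ^ 9 + (-48) * s ^ 11 + (-42) * s ^ 13 + (-32) * s ^ 15 + (-18) * s ^ 17) s := by
  have h := (((((((((hasDerivAt_const s (1 : ℝ)).add ((hasDerivAt_pow 2 s).const_mul (2 : ℝ))).add ((hasDerivAt_pow 4 s).const_mul (3 : ℝ))).add ((hasDerivAt_pow 6 s).const_mul (4 : ℝ))).add ((hasDerivAt_pow 8 s).const_mul (5 : ℝ))).add ((hasDerivAt_pow 10 s).const_mul (-5 : ℝ))).add ((hasDerivAt_pow 12 s).const_mul (-4 : ℝ))).add ((hasDerivAt_pow 14 s).const_mul (-3 : ℝ))).add ((hasDerivAt_pow 16 s).const_mul (-2 : ℝ))).add ((hasDerivAt_pow 18 s).const_mul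 (-1 : ℝ))
  exact h.congr_deriv (by push_cast; ring)

lemma hdB1 (s : ℝ) : HasDerivAt (fun s : ℝ => (-110) * s ^ 9 + (-174) * s ^ 11 + (-192) * s ^ 13 + (-164) * s ^ 15 + (-90) * s ^ 17 + 30 * s ^ 19 + 20 * s ^ 21 + 12 * s ^ 23 + 6 * s ^ 25 + 2 * s ^ 27) ((-990) * s ^ 8 + (-1914) * s ^ 10 + (-2496) * s ^ 12 + (-2460) * s ^ 14 + (-1530) * s ^ 16 + 570 * s ^ 18 + 420 * s ^ 20 + 276 * s ^ 22 + 150 * s ^ 24 + 54 * s ^ 26) s := by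
  have h := ((((((((((hasDerivAt_pow 9 s).const_mul (-110 : ℝ)).add ((hasDerivAt_pow 11 s).const_mul (-174 : ℝ))).add ((hasDerivAt_pow 13 s).const_mul (-192 : ℝ))).add ((hasDerivAt_pow 15 s).const_mul (-164 : ℝ))).add ((hasDerivAt_pow 17 s).const_mul (-90 : ℝ))).add ((hasDerivAt_pow 19 s).const_mul (30 : ℝ))).add ((hasDerivAt_pow 21 s).const_mul (20 : ℝ))).add ((hasDerivAt_pow 23 s).const_mul (12 : ℝ))).add ((hasDerivAt_pow 25 s).const_mul (6 : ℝ))).add ((hasDerivAt_pow 27 s).const_mul (2 : ℝ))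
  exact h.congr_deriv (by push_cast; ring)

lemma hdp2 (s : ℝ) : HasDerivAt (fun s : ℝ => s ^ 5 + s ^ 7 + s ^ 9) (5 * s ^ 4 + 7 * s ^ 6 + 9 * s ^ 8) s := by
  have h := ((hasDerivAt_pow 5 s).add (hasDerivAt_pow 7 s)).add (hasDerivAt_pow 9 s)
  exact h.congr_deriv (by push_cast; ring)

lemma hdA2 (s : ℝ) : HasDerivAt (fun s : ℝ => 5 * s ^ 4 + 10 * s ^ 6 + 15 * s ^ 8 + 9 * s ^ 10 + 3 * s ^ 12 + (-3) * s ^ 14 + (-2) * s ^ 16 + (-1) * s ^ 18) (20 * s ^ 3 + 60 * s ^ 5 + 120 * s ^ 7 + 90 * s ^ 9 + 36 * s ^ 11 + (-42) * s ^ 13 + (-32) * s ^ 15 + (-18) * s ^ 17) s := by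
  have h := ((((((((hasDerivAt_pow 4 s).const_mul (5 : ℝ)).add ((hasDerivAt_pow 6 s).const_mul (10 : ℝ))).add ((hasDerivAt_pow 8 s).const_mul (15 : ℝ))).add ((hasDerivAt_pow 10 s).const_mul (9 : ℝ))).add ((hasDerivAt_pow 12 s).const_mul (3 : ℝ))).add ((hasDerivAt_pow 14 s).const_mul (-3 : ℝ))).add ((hasDerivAt_pow 16 s).const_mul (-2 : ℝ))).add ((hasDerivAt_pow 18 s).const_mul (-1 : ℝ))
  exact h.congr_deriv (by push_cast; ring)

lemma hdB2 (s : ℝ) : HasDerivAt (fun s : ℝ => 20 * s ^ 3 + 60 * s ^ 5 + 120 * s ^ 7 + 90 * s ^ 9 + (-30) * s ^ 11 + (-240) * s ^ 13 + (-328) * s ^ 15 + (-294) * s ^ 17 + (-138) * s ^ 19 + (-36) * s ^ 21 + 12 * s ^ 23 + 6 * s ^ 25 + 2 * s ^ 27) (60 * s ^ 2 + 300 * s ^ 4 + 840 * s ^ 6 + 810 * s ^ 8 + (-330) * s ^ 10 + (-3120) * s ^ 12 + (-4920) * s ^ 14 + (-4998) * s ^ 16 + (-2622) * s ^ 18 +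 (-756) * s ^ 20 + 276 * s ^ 22 + 150 * s ^ 24 + 54 * s ^ 26) s := by
  have h := (((((((((((((hasDerivAt_pow 3 s).const_mul (20 : ℝ)).add ((hasDerivAt_pow 5 s).const_mul (60 : ℝ))).add ((hasDerivAt_pow 7 s).const_mul (120 : ℝ))).add ((hasDerivAt_pow 9 s).const_mul (90 : ℝ))).add ((hasDerivAt_pow 11 s).const_mul (-30 : ℝ))).add ((hasDerivAt_pow 13 s).const_mul (-240 : ℝ))).add ((hasDerivAt_pow 15 s).const_mul (-328 : ℝ))).add ((hasDerivAt_pow 17 s).const_mul (-294 : ℝ))).add ((hasDerivAt_pow 19 s).const_mul (-138 : ℝ))).add ((hasDerivAt_pow 21 s).const_mul (-36 : ℝ))).add ((hasDerivAt_pow 23 s).const_mul (12 : ℝ))).add ((hasDerivAt_pow 25 s).const_mul (6 : ℝ))).add ((hasDerivAt_pow 27 s).const_mul (2 : ℝ))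
  exact h.congr_deriv (by push_cast; ring)

lemma hdp3 (s : ℝ) : HasDerivAt (fun s : ℝ => s ^ 10) (10 * s ^ 9) s := by
  have h := hasDerivAt_pow 10 s
  exact h.congr_deriv (by push_cast; ring)

lemma hdA3 (s : ℝ) : HasDerivAt (fun s : ℝ => 10 * s ^ 9 + 8 * s ^ 11 + 6 * s ^ 13 + 4 * s ^ 15 + 2 * s ^ 17) (90 * s ^ 8 + 88 * s ^ 10 + 78 * s ^ 12 + 60 * s ^ 14 + 34 * s ^ 16) s := by
  have h := (((((hasDerivAt_pow 9 s).const_mul (10 : ℝ)).add ((hasDerivAt_pow 11 s).const_mul (8 : ℝ))).add ((hasDerivAt_pow 13 s).const_mul (6 : ℝ))).add ((hasDerivAt_pow 15 s).const_mul (4 : ℝ))).add ((hasDerivAt_pow 17 s).const_mul (2 : ℝ))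
  exact h.congr_deriv (by push_cast; ring)

lemma hdB3 (s : ℝ) : HasDerivAt (fun s : ℝ => 90 * s ^ 8 + 138 * s ^ 10 + 144 * s ^ 12 + 108 * s ^ 14 + 30 * s ^ 16 + (-90) * s ^ 18 + (-60) * s ^ 20 + (-36) * s ^ 22 + (-18) * s ^ 24 + (-6) * s ^ 26) (720 * s ^ 7 + 1380 * s ^ 9 + 1728 * s ^ 11 + 1512 * s ^ 13 + 480 * s ^ 15 + (-1620) * s ^ 17 + (-1200) * s ^ 19 + (-792) * s ^ 21 + (-432) * s ^ 23 + (-156) * s ^ 25) s := by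
  have h := ((((((((((hasDerivAt_pow 8 s).const_mul (90 : ℝ)).add ((hasDerivAt_pow 10 s).const_mul (138 : ℝ))).add ((hasDerivAt_pow 12 s).const_mul (144 : ℝ))).add ((hasDerivAt_pow 14 s).const_mul (108 : ℝ))).add ((hasDerivAt_pow 16 s).const_mul (30 : ℝ))).add ((hasDerivAt_pow 18 s).const_mul (-90 : ℝ))).add ((hasDerivAt_pow 20 s).const_mul (-60 : ℝ))).add ((hasDerivAt_pow 22 s).const_mul (-36 : ℝ))).add ((hasDerivAt_pow 24 s).const_mul (-18 : ℝ))).add ((hasDerivAt_pow 26 s).const_mul (-6 : ℝ))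
  exact h.congr_deriv (by push_cast; ring)

lemma deriv_kurono :
    deriv kurono = fun s : ℝ => (WithLp.equiv 2 (Fin 3 → ℝ)).symm
      ![((1 : ℝ) + 2 * s ^ 2 + 3 * s ^ 4 + 4 * s ^ 6 + 5 * s ^ 8 + (-5) * s ^ 10 + (-4) * s ^ 12 + (-3) * s ^ 14 + (-2) * s ^ 16 + (-1) * s ^ 18) / (1 + s ^ 2 + s ^ 4 + s ^ 6 + s ^ 8 + s ^ 10) ^ 2,
        (5 * s ^ 4 + 10 * s ^ 6 + 15 * s ^ 8 + 9 * s ^ 10 + 3 * s ^ 12 + (-3) * s ^ 14 + (-2) * s ^ 16 + (-1) * s ^ 18) / (1 + s ^ 2 + s ^ 4 + s ^ 6 + s ^ 8 + s ^ 10) ^ 2,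
        (10 * s ^ 9 + 8 * s ^ 11 + 6 * s ^ 13 + 4 * s ^ 15 + 2 * s ^ 17) / (1 + s ^ 2 + s ^ 4 + s ^ 6 + s ^ 8 + s ^ 10) ^ 2] := by
  funext s
  have h1 : HasDerivAt (fun s : ℝ => (s + s ^ 3 + s ^ 5 + s ^ 7 + s ^ 9) / (1 + s ^ 2 + s ^ 4 + s ^ 6 + s ^ 8 + s ^ 10))
      (((1 : ℝ) + 2 * s ^ 2 + 3 * s ^ 4 + 4 * s ^ 6 + 5 * s ^ 8 + (-5) * s ^ 10 + (-4) * s ^ 12 + (-3) * s ^ 14 + (-2) * s ^ 16 + (-1) * s ^ 18) / (1 + s ^ 2 + s ^ 4 + s ^ 6 + s ^ 8 + s ^ 10) ^ 2) s := by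
    have h := (hdp1 s).div (hdq s) (hq s)
    refine h.congr_deriv ?_
    field_simp
    ring
  have h2 : HasDerivAt (fun s : ℝ => (s ^ 5 + s ^ 7 + s ^ 9) / (1 + s ^ 2 + s ^ 4 + s ^ 6 + s ^ 8 + s ^ 10))
      ((5 * s ^ 4 + 10 * s ^ 6 + 15 * s ^ 8 + 9 * s ^ 10 + 3 * s ^ 12 + (-3) * s ^ 14 + (-2) * s ^ 16 + (-1) * s ^ 18) / (1 + s ^ 2 + s ^ 4 + s ^ 6 + s ^ 8 + s ^ 10) ^ 2) s := by
    have h := (hdp2 s).div (hdq s) (hq s)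
    refine h.congr_deriv ?_
    field_simp
    ring
  have h3 : HasDerivAt (fun s : ℝ => (s ^ 10) / (1 + s ^ 2 + s ^ 4 + s ^ 6 + s ^ 8 + s ^ 10))
      ((10 * s ^ 9 + 8 * s ^ 11 + 6 * s ^ 13 + 4 * s ^ 15 + 2 * s ^ 17) / (1 + s ^ 2 + s ^ 4 + s ^ 6 + s ^ 8 + s ^ 10) ^ 2) s := by
    have h := (hdp3 s).div (hdq s) (hq s)
    refine h.congr_deriv ?_
    field_simp
    ring
  have H := hasDerivAt_e3 h1 h2 h3
  exact HasDerivAt.deriv H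


lemma deriv2_kurono :
    deriv (deriv kurono) = fun s : ℝ => (WithLp.equiv 2 (Fin 3 → ℝ)).symm
      ![((-110) * s ^ 9 + (-174) * s ^ 11 + (-192) * s ^ 13 + (-164) * s ^ 15 + (-90) * s ^ 17 + 30 * s ^ 19 + 20 * s ^ 21 + 12 * s ^ 23 + 6 * s ^ 25 + 2 * s ^ 27) / (1 + s ^ 2 + s ^ 4 + s ^ 6 + s ^ 8 + s ^ 10) ^ 3,
        (20 * s ^ 3 + 60 * s ^ 5 + 120 * s ^ 7 + 90 * s ^ 9 + (-30) * s ^ 11 + (-240) * s ^ 13 + (-328) * s ^ 15 + (-294) * s ^ 17 + (-138) * s ^ 19 + (-36) * s ^ 21 + 12 * s ^ 23 + 6 * s ^ 25 + 2 * s ^ 27) / (1 + s ^ 2 + s ^ 4 + s ^ 6 + s ^ 8 + s ^ 10) ^ 3,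
        (90 * s ^ 8 + 138 * s ^ 10 + 144 * s ^ 12 + 108 * s ^ 14 + 30 * s ^ 16 + (-90) * s ^ 18 + (-60) * s ^ 20 + (-36) * s ^ 22 + (-18) * s ^ 24 + (-6) * s ^ 26) / (1 + s ^ 2 + s ^ 4 + s ^ 6 + s ^ 8 + s ^ 10) ^ 3] := by
  rw [deriv_kurono]
  funext s
  have h1 : HasDerivAt (fun s : ℝ => ((1 : ℝ) + 2 * s ^ 2 + 3 * s ^ 4 + 4 * s ^ 6 + 5 * s ^ 8 + (-5) * s ^ 10 + (-4) * s ^ 12 + (-3) * s ^ 14 + (-2) * s ^ 16 + (-1) * s ^ 18) / (1 + s ^ 2 + s ^ 4 + s ^ 6 + s ^ 8 + s ^ 10) ^ 2)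
      (((-110) * s ^ 9 + (-174) * s ^ 11 + (-192) * s ^ 13 + (-164) * s ^ 15 + (-90) * s ^ 17 + 30 * s ^ 19 + 20 * s ^ 21 + 12 * s ^ 23 + 6 * s ^ 25 + 2 * s ^ 27) / (1 + s ^ 2 + s ^ 4 + s ^ 6 + s ^ 8 + s ^ 10) ^ 3) s := by
    have h := (hdA1 s).div ((hdq s).pow 2) (pow_ne_zero 2 (hq s))
    refine h.congr_deriv ?_
    simp only [Pi.pow_apply]
    field_simp
    ring
  have h2 : HasDerivAt (fun s : ℝ => (5 * s ^ 4 + 10 * s ^ 6 + 15 * s ^ 8 + 9 * s ^ 10 + 3 * s ^ 12 + (-3) * s ^ 14 + (-2) * s ^ 16 + (-1) * s ^ 18) / (1 + s ^ 2 + s ^ 4 + s ^ 6 + s ^ 8 + s ^ 10) ^ 2)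
      ((20 * s ^ 3 + 60 * s ^ 5 + 120 * s ^ 7 + 90 * s ^ 9 + (-30) * s ^ 11 + (-240) * s ^ 13 + (-328) * s ^ 15 + (-294) * s ^ 17 + (-138) * s ^ 19 + (-36) * s ^ 21 + 12 * s ^ 23 + 6 * s ^ 25 + 2 * s ^ 27) / (1 + s ^ 2 + s ^ 4 + s ^ 6 + s ^ 8 + s ^ 10) ^ 3) s := by
    have h := (hdA2 s).div ((hdq s).pow 2) (pow_ne_zero 2 (hq s))
    refine h.congr_deriv ?_
    simp only [Pi.pow_apply]
    field_simp
    ring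
  have h3 : HasDerivAt (fun s : ℝ => (10 * s ^ 9 + 8 * s ^ 11 + 6 * s ^ 13 + 4 * s ^ 15 + 2 * s ^ 17) / (1 + s ^ 2 + s ^ 4 + s ^ 6 + s ^ 8 + s ^ 10) ^ 2)
      ((90 * s ^ 8 + 138 * s ^ 10 + 144 * s ^ 12 + 108 * s ^ 14 + 30 * s ^ 16 + (-90) * s ^ 18 + (-60) * s ^ 20 + (-36) * s ^ 22 + (-18) * s ^ 24 + (-6) * s ^ 26) / (1 + s ^ 2 + s ^ 4 + s ^ 6 + s ^ 8 + s ^ 10) ^ 3) s := by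
    have h := (hdA3 s).div ((hdq s).pow 2) (pow_ne_zero 2 (hq s))
    refine h.congr_deriv ?_
    simp only [Pi.pow_apply]
    field_simp
    ring
  have H := hasDerivAt_e3 h1 h2 h3
  exact HasDerivAt.deriv H


lemma deriv3_kurono :
    deriv (deriv (deriv kurono)) = fun s : ℝ => (WithLp.equiv 2 (Fin 3 → ℝ)).symm
      ![((-990) * s ^ 8 + (-2244) * s ^ 10 + (-3036) * s ^ 12 + (-2640) * s ^ 14 + (-330) * s ^ 16 + 4620 * s ^ 18 + 6270 * s ^ 20 + 5616 * s ^ 22 + 3654 * s ^ 24 + 1380 * s ^ 26 + (-210) * s ^ 28 + (-120) * s ^ 30 + (-60) * s ^ 32 + (-24) * s ^ 34 + (-6) * s ^ 36) / (1 + s ^ 2 + s ^ 4 + s ^ 6 + s ^ 8 + s ^ 10) ^ 4,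
        (60 * s ^ 2 + 240 * s ^ 4 + 600 * s ^ 6 + 210 * s ^ 8 + (-1860) * s ^ 10 + (-6540) * s ^ 12 + (-10920) * s ^ 14 + (-12090) * s ^ 16 + (-7140) * s ^ 18 + 174 * s ^ 20 + 6096 * s ^ 22 + 6870 * s ^ 24 + 4704 * s ^ 26 + 1806 * s ^ 28 + 384 * s ^ 30 + (-60) * s ^ 32 + (-24) * s ^ 34 + (-6) * s ^ 36) / (1 + s ^ 2 + s ^ 4 + s ^ 6 + s ^ 8 + s ^ 10) ^ 4,
        (720 * s ^ 7 + 1560 * s ^ 9 + 1920 * s ^ 11 + 1200 * s ^ 13 + (-1200) * s ^ 15 + (-5880) * s ^ 17 + (-7080) * s ^ 19 + (-5904) * s ^ 21 + (-3456) * s ^ 23 + (-840) * s ^ 25 + 840 * s ^ 27 + 480 * s ^ 29 + 240 * s ^ 31 + 96 * s ^ 33 + 24 * s ^ 35) / (1 + s ^ 2 + s ^ 4 + s ^ 6 + s ^ 8 + s ^ 10) ^ 4] := by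
  rw [deriv2_kurono]
  funext s
  have h1 : HasDerivAt (fun s : ℝ => ((-110) * s ^ 9 + (-174) * s ^ 11 + (-192) * s ^ 13 + (-164) * s ^ 15 + (-90) * s ^ 17 + 30 * s ^ 19 + 20 * s ^ 21 + 12 * s ^ 23 + 6 * s ^ 25 + 2 * s ^ 27) / (1 + s ^ 2 + s ^ 4 + s ^ 6 + s ^ 8 + s ^ 10) ^ 3)
      (((-990) * s ^ 8 + (-2244) * s ^ 10 + (-3036) * s ^ 12 + (-2640) * s ^ 14 + (-330) * s ^ 16 + 4620 * s ^ 18 + 6270 * s ^ 20 + 5616 * s ^ 22 + 3654 * s ^ 24 + 1380 * s ^ 26 + (-210) * s ^ 28 + (-120) * s ^ 30 + (-60) * s ^ 32 + (-24) * s ^ 34 + (-6) * s ^ 36) / (1 + s ^ 2 + s ^ 4 + s ^ 6 + s ^ 8 + s ^ 10) ^ 4) s := by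
    have h := (hdB1 s).div ((hdq s).pow 3) (pow_ne_zero 3 (hq s))
    refine h.congr_deriv ?_
    simp only [Pi.pow_apply]
    field_simp
    ring
  have h2 : HasDerivAt (fun s : ℝ => (20 * s ^ 3 + 60 * s ^ 5 + 120 * s ^ 7 + 90 * s ^ 9 + (-30) * s ^ 11 + (-240) * s ^ 13 + (-328) * s ^ 15 + (-294) * s ^ 17 + (-138) * s ^ 19 + (-36) * s ^ 21 + 12 * s ^ 23 + 6 * s ^ 25 + 2 * s ^ 27) / (1 + s ^ 2 + s ^ 4 + s ^ 6 + s ^ 8 + s ^ 10) ^ 3)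
      ((60 * s ^ 2 + 240 * s ^ 4 + 600 * s ^ 6 + 210 * s ^ 8 + (-1860) * s ^ 10 + (-6540) * s ^ 12 + (-10920) * s ^ 14 + (-12090) * s ^ 16 + (-7140) * s ^ 18 + 174 * s ^ 20 + 6096 * s ^ 22 + 6870 * s ^ 24 + 4704 * s ^ 26 + 1806 * s ^ 28 + 384 * s ^ 30 + (-60) * s ^ 32 + (-24) * s ^ 34 + (-6) * s ^ 36) / (1 + s ^ 2 + s ^ 4 + s ^ 6 + s ^ 8 + s ^ 10) ^ 4) s := by
    have h := (hdB2 s).div ((hdq s).pow 3) (pow_ne_zero 3 (hq s))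
    refine h.congr_deriv ?_
    simp only [Pi.pow_apply]
    field_simp
    ring
  have h3 : HasDerivAt (fun s : ℝ => (90 * s ^ 8 + 138 * s ^ 10 + 144 * s ^ 12 + 108 * s ^ 14 + 30 * s ^ 16 + (-90) * s ^ 18 + (-60) * s ^ 20 + (-36) * s ^ 22 + (-18) * s ^ 24 + (-6) * s ^ 26) / (1 + s ^ 2 + s ^ 4 + s ^ 6 + s ^ 8 + s ^ 10) ^ 3)
      ((720 * s ^ 7 + 1560 * s ^ 9 + 1920 * s ^ 11 + 1200 * s ^ 13 + (-1200) * s ^ 15 + (-5880) * s ^ 17 + (-7080) * s ^ 19 + (-5904) * s ^ 21 + (-3456) * s ^ 23 + (-840) * s ^ 25 + 840 * s ^ 27 + 480 * s ^ 29 + 240 * s ^ 31 + 96 * s ^ 33 + 24 * s ^ 35) / (1 + s ^ 2 + s ^ 4 + s ^ 6 + s ^ 8 + s ^ 10) ^ 4) s := by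
    have h := (hdB3 s).div ((hdq s).pow 3) (pow_ne_zero 3 (hq s))
    refine h.congr_deriv ?_
    simp only [Pi.pow_apply]
    field_simp
    ring
  have H := hasDerivAt_e3 h1 h2 h3
  exact HasDerivAt.deriv H


set_option maxHeartbeats 2000000 in
/-- At s = 0 the curve has a non-generic inflection point of order N = 3 with order of
torsion M = 10 ≥ 3N. -/
theorem kurono_nongeneric_inflection_and_torsion_order :
    let w : ℝ → E3 := fun s => cross3 (deriv kurono s) (deriv (deriv kurono) s)
    let Δ : ℝ → ℝ := fun s =>
      det3 (deriv kurono s) (deriv (deriv kurono) s) (deriv (deriv (deriv kurono)) s)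
    deriv kurono 0 ≠ 0 ∧
    w 0 = 0 ∧ deriv w 0 = 0 ∧ iteratedDeriv 2 w 0 = 0 ∧ iteratedDeriv 3 w 0 ≠ 0 ∧
    (∀ k ≤ 9, iteratedDeriv k Δ 0 = 0) ∧
    iteratedDeriv 10 Δ 0 ≠ 0 := by
  intro w Δ
  have hg1 : ContDiff ℝ ∞ (fun s : ℝ => (250 * s ^ 9 + 830 * s ^ 11 + 1650 * s ^ 13 + 2560 * s ^ 15 + 3482 * s ^ 17 + 4410 * s ^ 19 + 4840 * s ^ 21 + 4610 * s ^ 23 + 3900 * s ^ 25 + 3010 * s ^ 27 + 2096 * s ^ 29 + 1170 * s ^ 31 + 490 * s ^ 33 + 140 * s ^ 35 + 30 * s ^ 37 + 10 * s ^ 39 + 2 * s ^ 41) / (1 + s ^ 2 + s ^ 4 + s ^ 6 + s ^ 8 + s ^ 10) ^ 5) := by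
    fun_prop (disch := exact fun s => pow_ne_zero 5 (hq s))
  have hg2 : ContDiff ℝ ∞ (fun s : ℝ => ((-90) * s ^ 5 + (-318) * s ^ 7 + (-690) * s ^ 9 + (-1170) * s ^ 11 + (-1680) * s ^ 13 + (-2210) * s ^ 15 + (-2572) * s ^ 17 + (-2664) * s ^ 19 + (-2470) * s ^ 21 + (-2060) * s ^ 23 + (-1590) * s ^ 25 + (-1080) * s ^ 27 + (-636) * s ^ 29 + (-318) * s ^ 31 + (-140) * s ^ 33 + (-70) * s ^ 35 + (-30) * s ^ 37 + (-10) * s ^ 39 + (-2) * s ^ 41) / (1 + s ^ 2 + s ^ 4 + s ^ 6 + s ^ 8 + s ^ 10) ^ 5) := by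
    fun_prop (disch := exact fun s => pow_ne_zero 5 (hq s))
  have hg3 : ContDiff ℝ ∞ (fun s : ℝ => ((20 : ℝ) + 100 * s ^ 2 + 300 * s ^ 4 + 590 * s ^ 6 + 850 * s ^ 8 + 1200 * s ^ 10 + 1652 * s ^ 12 + 2110 * s ^ 14 + 2370 * s ^ 16 + 2450 * s ^ 18 + 2590 * s ^ 20 + 2550 * s ^ 22 + 2246 * s ^ 24 + 1750 * s ^ 26 + 1290 * s ^ 28 + 920 * s ^ 30 + 520 * s ^ 32 + 210 * s ^ 34 + 42 * s ^ 36) / (1 + s ^ 2 + s ^ 4 + s ^ 6 + s ^ 8 + s ^ 10) ^ 5) := by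
    fun_prop (disch := exact fun s => pow_ne_zero 5 (hq s))
  have hgD : ContDiff ℝ ∞ (fun s : ℝ => ((9000 : ℝ) + 62520 * s ^ 2 + 238680 * s ^ 4 + 663300 * s ^ 6 + 1509420 * s ^ 8 + 2995080 * s ^ 10 + 5336640 * s ^ 12 + 8660760 * s ^ 14 + 12924000 * s ^ 16 + 17887320 * s ^ 18 + 23118480 * s ^ 20 + 28003140 * s ^ 22 + 31843260 * s ^ 24 + 34034400 * s ^ 26 + 34226520 * s ^ 28 + 32374980 * s ^ 30 + 28735740 * s ^ 32 + 23843160 * s ^ 34 + 18403200 * s ^ 36 + 13114020 * s ^ 38 + 8505180 * s ^ 40 + 4886640 * s ^ 42 + 2353560 * s ^ 44 + 808500 * s ^ 46 + 23220 * s ^ 48 + (-269520) * s ^ 50 + (-295560) * s ^ 52 + (-213840) * s ^ 54 + (-118800) * s ^ 56 + (-51480) * s ^ 58 + (-16920) * s ^ 60 + (-3780) * s ^ 62 + (-420) * s ^ 64) / (1 + s ^ 2 + s ^ 4 + s ^ 6 + s ^ 8 + s ^ 10) ^ 9) := by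
    fun_prop (disch := exact fun s => pow_ne_zero 9 (hq s))
  have hw : w = fun s : ℝ => (WithLp.equiv 2 (Fin 3 → ℝ)).symm
      ![s ^ 3 * ((250 * s ^ 9 + 830 * s ^ 11 + 1650 * s ^ 13 + 2560 * s ^ 15 + 3482 * s ^ 17 + 4410 * s ^ 19 + 4840 * s ^ 21 + 4610 * s ^ 23 + 3900 * s ^ 25 + 3010 * s ^ 27 + 2096 * s ^ 29 + 1170 * s ^ 31 + 490 * s ^ 33 + 140 * s ^ 35 + 30 * s ^ 37 + 10 * s ^ 39 + 2 * s ^ 41) / (1 + s ^ 2 + s ^ 4 + s ^ 6 + s ^ 8 + s ^ 10) ^ 5),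
        s ^ 3 * (((-90) * s ^ 5 + (-318) * s ^ 7 + (-690) * s ^ 9 + (-1170) * s ^ 11 + (-1680) * s ^ 13 + (-2210) * s ^ 15 + (-2572) * s ^ 17 + (-2664) * s ^ 19 + (-2470) * s ^ 21 + (-2060) * s ^ 23 + (-1590) * s ^ 25 + (-1080) * s ^ 27 + (-636) * s ^ 29 + (-318) * s ^ 31 + (-140) * s ^ 33 + (-70) * s ^ 35 + (-30) * s ^ 37 + (-10) * s ^ 39 + (-2) * s ^ 41) / (1 + s ^ 2 + s ^ 4 + s ^ 6 + s ^ 8 + s ^ 10) ^ 5),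
        s ^ 3 * (((20 : ℝ) + 100 * s ^ 2 + 300 * s ^ 4 + 590 * s ^ 6 + 850 * s ^ 8 + 1200 * s ^ 10 + 1652 * s ^ 12 + 2110 * s ^ 14 + 2370 * s ^ 16 + 2450 * s ^ 18 + 2590 * s ^ 20 + 2550 * s ^ 22 + 2246 * s ^ 24 + 1750 * s ^ 26 + 1290 * s ^ 28 + 920 * s ^ 30 + 520 * s ^ 32 + 210 * s ^ 34 + 42 * s ^ 36) / (1 + s ^ 2 + s ^ 4 + s ^ 6 + s ^ 8 + s ^ 10) ^ 5)] := by
    funext s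
    show cross3 (deriv kurono s) (deriv (deriv kurono) s) = _
    rw [deriv2_kurono, deriv_kurono]
    simp only [cross3, WithLp.equiv_symm_apply, PiLp.toLp_apply, Matrix.cons_val_zero, Matrix.cons_val_one,
      Matrix.head_cons, Matrix.cons_val_two, Matrix.tail_cons]
    apply congrArg
    have hQ := hq s
    funext i
    fin_cases i <;>
      simp only [Matrix.cons_val_zero, Matrix.cons_val_one, Matrix.head_cons,
        Matrix.cons_val_two, Matrix.tail_cons] <;>
      (field_simp; ring)
  have hD : Δ = fun s : ℝ => s ^ 10 * (((9000 : ℝ) + 62520 * s ^ 2 + 238680 * s ^ 4 + 663300 * s ^ 6 + 1509420 * s ^ 8 + 2995080 * s ^ 10 + 5336640 * s ^ 12 + 8660760 * s ^ 14 + 12924000 * s ^ 16 + 17887320 * s ^ 18 + 23118480 * s ^ 20 + 28003140 * s ^ 22 + 31843260 * s ^ 24 + 34034400 * s ^ 26 + 34226520 * s ^ 28 + 32374980 * s ^ 30 + 28735740 * s ^ 32 + 23843160 * s ^ 34 + 18403200 * s ^ 36 + 13114020 * s ^ 38 + 8505180 * s ^ 40 + 4886640 * s ^ 42 + 2353560 *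 s ^ 44 + 808500 * s ^ 46 + 23220 * s ^ 48 + (-269520) * s ^ 50 + (-295560) * s ^ 52 + (-213840) * s ^ 54 + (-118800) * s ^ 56 + (-51480) * s ^ 58 + (-16920) * s ^ 60 + (-3780) * s ^ 62 + (-420) * s ^ 64) / (1 + s ^ 2 + s ^ 4 + s ^ 6 + s ^ 8 + s ^ 10) ^ 9) := by
    funext s
    show det3 (deriv kurono s) (deriv (deriv kurono) s) (deriv (deriv (deriv kurono)) s) = _
    rw [deriv3_kurono, deriv2_kurono, deriv_kurono]
    simp only [det3, dot3, cross3, WithLp.equiv_symm_apply, PiLp.toLp_apply, Matrix.cons_val_zero,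
      Matrix.cons_val_one, Matrix.head_cons, Matrix.cons_val_two, Matrix.tail_cons]
    have hQ := hq s
    field_simp
    ring
  have hiter : ∀ k : ℕ, iteratedDeriv k w 0 = (WithLp.equiv 2 (Fin 3 → ℝ)).symm
      ![iteratedDeriv k (fun s : ℝ => s ^ 3 * ((250 * s ^ 9 + 830 * s ^ 11 + 1650 * s ^ 13 + 2560 * s ^ 15 + 3482 * s ^ 17 + 4410 * s ^ 19 + 4840 * s ^ 21 + 4610 * s ^ 23 + 3900 * s ^ 25 + 3010 * s ^ 27 + 2096 * s ^ 29 + 1170 * s ^ 31 + 490 * s ^ 33 + 140 * s ^ 35 + 30 * s ^ 37 + 10 * s ^ 39 + 2 * s ^ 41) / (1 + s ^ 2 + s ^ 4 + s ^ 6 + s ^ 8 + s ^ 10) ^ 5)) 0,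
        iteratedDeriv k (fun s : ℝ => s ^ 3 * (((-90) * s ^ 5 + (-318) * s ^ 7 + (-690) * s ^ 9 + (-1170) * s ^ 11 + (-1680) * s ^ 13 + (-2210) * s ^ 15 + (-2572) * s ^ 17 + (-2664) * s ^ 19 + (-2470) * s ^ 21 + (-2060) * s ^ 23 + (-1590) * s ^ 25 + (-1080) * s ^ 27 + (-636) * s ^ 29 + (-318) * s ^ 31 + (-140) * s ^ 33 + (-70) * s ^ 35 + (-30) * s ^ 37 + (-10) * s ^ 39 + (-2) * s ^ 41) / (1 + s ^ 2 + s ^ 4 + s ^ 6 + s ^ 8 + s ^ 10) ^ 5)) 0,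
        iteratedDeriv k (fun s : ℝ => s ^ 3 * (((20 : ℝ) + 100 * s ^ 2 + 300 * s ^ 4 + 590 * s ^ 6 + 850 * s ^ 8 + 1200 * s ^ 10 + 1652 * s ^ 12 + 2110 * s ^ 14 + 2370 * s ^ 16 + 2450 * s ^ 18 + 2590 * s ^ 20 + 2550 * s ^ 22 + 2246 * s ^ 24 + 1750 * s ^ 26 + 1290 * s ^ 28 + 920 * s ^ 30 + 520 * s ^ 32 + 210 * s ^ 34 + 42 * s ^ 36) / (1 + s ^ 2 + s ^ 4 + s ^ 6 + s ^ 8 + s ^ 10) ^ 5)) 0] := by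
    intro k
    rw [hw]
    exact iteratedDeriv_e3 k _ _ _ ((contDiff_id.pow 3).mul hg1) ((contDiff_id.pow 3).mul hg2)
      ((contDiff_id.pow 3).mul hg3) 0
  have e3z : ((WithLp.equiv 2 (Fin 3 → ℝ)).symm ![(0:ℝ), 0, 0] : E3) = 0 := by
    rw [Equiv.symm_apply_eq]
    funext i
    fin_cases i <;> simp
  refine ⟨?_, ?_, ?_, ?_, ?_, ?_, ?_⟩
  · rw [deriv_kurono]
    apply e3_ne_zero _ 0
    simp only [Matrix.cons_val_zero]
    norm_num
  · have h := hiter 0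
    rw [(key 3 _ hg1).1 0 (by norm_num), (key 3 _ hg2).1 0 (by norm_num),
      (key 3 _ hg3).1 0 (by norm_num), iteratedDeriv_zero] at h
    rw [h]
    exact e3z
  · have h := hiter 1
    rw [iteratedDeriv_one] at h
    rw [h, (key 3 _ hg1).1 1 (by norm_num), (key 3 _ hg2).1 1 (by norm_num),
      (key 3 _ hg3).1 1 (by norm_num)]
    exact e3z
  · rw [hiter 2, (key 3 _ hg1).1 2 (by norm_num), (key 3 _ hg2).1 2 (by norm_num),
      (key 3 _ hg3).1 2 (by norm_num)]
    exact e3z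
  · rw [hiter 3, (key 3 _ hg1).2, (key 3 _ hg2).2, (key 3 _ hg3).2]
    apply e3_ne_zero _ 2
    simp only [Matrix.cons_val_two, Matrix.tail_cons, Matrix.head_cons]
    norm_num [Nat.factorial]
  · intro k hk
    rw [hD]
    exact (key 10 _ hgD).1 k (by omega)
  · rw [hD, (key 10 _ hgD).2]
    norm_num [Nat.factorial]
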